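/- Let L ⊂ ℝ^N be a full-rank lattice, 1 ≤ m ≤ N, and U ⊂ ℝ^N a nonempty open cone. Then U contains m vectors l1, …, lm of L forming a primitive set, i.e., a set extendable to a ℤ-basis of L. -/

import Mathlib

open Filter Topology Module

/-- In an open cone, adding a large multiple of a cone element keeps you in the cone. -/
lemma aux_cone_absorb {E : Type*} [NormedAddCommGroup E] [NormedSpace ℝ E]
    (U : Set E) (hUo : IsOpen U)
    (hUcone : ∀ x ∈ U, ∀ t : ℝ, 0 < t → t • x ∈ U)
    {p : E} (hp : p ∈ U) (y : E) :
    ∃ n : ℕ, 0 < n ∧ y + (n : ℝ) • p ∈ U := by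
  have h1 : Tendsto (fun n : ℕ => (n : ℝ)⁻¹ • y + p) atTop (𝓝 p) := by
    have := (tendsto_inv_atTop_nhds_zero_nat (𝕜 := ℝ)).smul_const y
    simpa using this.add_const p
  have h2 : ∀ᶠ n : ℕ in atTop, (n : ℝ)⁻¹ • y + p ∈ U :=
    h1.eventually (hUo.mem_nhds hp) |>.mono (fun _ h => h)
  obtain ⟨n, hn1, hn2⟩ := (h2.and (eventually_ge_atTop 1)).exists
  refine ⟨n, hn2, ?_⟩
  have hnpos : (0:ℝ) < n := by exact_mod_cast hn2
  have := hUcone _ hn1 n hnpos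
  rwa [smul_add, smul_smul, mul_inv_cancel₀ (ne_of_gt hnpos), one_smul] at this

lemma aux_round_div (c : ℝ) :
    Tendsto (fun n : ℕ => ((round ((n:ℝ) * c) : ℤ) : ℝ) / n) atTop (𝓝 c) := by
  rw [← tendsto_sub_nhds_zero_iff]
  refine squeeze_zero_norm' (a := fun n : ℕ => (n:ℝ)⁻¹) ?_ (tendsto_inv_atTop_nhds_zero_nat (𝕜 := ℝ))
  filter_upwards [eventually_ge_atTop 1] with n hn
  have hn' : (1:ℝ) ≤ n := by exact_mod_cast hn
  have h0 : (0:ℝ) < n := lt_of_lt_of_le one_pos hn'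
  have heq : ((round ((n:ℝ) * c) : ℤ) : ℝ) / n - c
      = (((round ((n:ℝ)*c) : ℤ):ℝ) - (n:ℝ) * c) / n := by
    field_simp
  rw [Real.norm_eq_abs, heq, abs_div, abs_of_pos h0, div_le_iff₀ h0,
    inv_mul_cancel₀ (ne_of_gt h0)]
  calc |((round ((n:ℝ)*c) : ℤ):ℝ) - (n:ℝ) * c| = |(n:ℝ) * c - round ((n:ℝ)*c)| := by
        rw [abs_sub_comm]
    _ ≤ 1/2 := abs_sub_round _
    _ ≤ 1 := by norm_num

lemma aux_nonzero_pt {E : Type*} [NormedAddCommGroup E] [NormedSpace ℝ E] [Nontrivial E]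
    (U : Set E) (hUo : IsOpen U) (hUne : U.Nonempty) :
    ∃ x ∈ U, x ≠ 0 := by
  obtain ⟨x₀, hx₀⟩ := hUne
  rcases eq_or_ne x₀ 0 with h | h
  · obtain ⟨ε, hε, hball⟩ := Metric.isOpen_iff.mp hUo x₀ hx₀
    obtain ⟨z, hz⟩ := exists_ne (0 : E)
    have hz' : (0:ℝ) < ‖z‖ := norm_pos_iff.mpr hz
    refine ⟨(ε / (2 * ‖z‖)) • z, hball ?_, smul_ne_zero (by positivity) hz⟩
    rw [h, Metric.mem_ball, dist_zero_right, norm_smul, Real.norm_eq_abs,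
      abs_of_pos (by positivity)]
    rw [div_mul_eq_mul_div, mul_comm, mul_div_assoc]
    calc ‖z‖ * (ε / (2 * ‖z‖)) = ε / 2 := by field_simp
      _ < ε := by linarith
  · exact ⟨x₀, hx₀, h⟩

lemma aux_lattice_point {N : ℕ} (hN : 0 < N) (L : Submodule ℤ (EuclideanSpace ℝ (Fin N)))
    [DiscreteTopology L] [IsZLattice ℝ L]
    (U : Set (EuclideanSpace ℝ (Fin N))) (hUo : IsOpen U) (hUne : U.Nonempty)
    (hUcone : ∀ x ∈ U, ∀ t : ℝ, 0 < t → t • x ∈ U) :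
    ∃ q : L, q ≠ 0 ∧ (q : EuclideanSpace ℝ (Fin N)) ∈ U := by
  haveI : Module.Finite ℤ L := ZLattice.module_finite ℝ L
  haveI : Module.Free ℤ L := ZLattice.module_free ℝ L
  haveI : Nonempty (Fin N) := ⟨⟨0, hN⟩⟩
  haveI : Nontrivial (EuclideanSpace ℝ (Fin N)) := inferInstance
  obtain ⟨x, hxU, hx0⟩ := aux_nonzero_pt U hUo hUne
  let b : Basis (Fin N) ℤ L := Module.finBasisOfFinrankEq ℤ L
    (by rw [ZLattice.rank ℝ L, finrank_euclideanSpace_fin])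
  let e : Basis (Fin N) ℝ (EuclideanSpace ℝ (Fin N)) := Basis.ofZLatticeBasis ℝ L b
  set c : Fin N → ℝ := fun i => e.repr x i with hc
  set q : ℕ → L := fun n => ∑ i, round ((n:ℝ) * c i) • b i with hqdef
  have hq : ∀ n : ℕ, ((q n : L) : EuclideanSpace ℝ (Fin N))
      = ∑ i, (((round ((n:ℝ) * c i) : ℤ) : ℝ)) • e i := by
    intro n
    rw [hqdef]
    push_cast [Int.cast_smul_eq_zsmul]
    simp [e, Basis.ofZLatticeBasis_apply, Int.cast_smul_eq_zsmul]
  have hgt : Tendsto (fun n : ℕ => (n:ℝ)⁻¹ • ((q n : L) : EuclideanSpace ℝ (Fin N)))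
      atTop (𝓝 x) := by
    have heq : ∀ n : ℕ, (n:ℝ)⁻¹ • ((q n : L) : EuclideanSpace ℝ (Fin N))
        = ∑ i, ((((round ((n:ℝ) * c i) : ℤ) : ℝ)) / n) • e i := by
      intro n
      rw [hq, Finset.smul_sum]
      refine Finset.sum_congr rfl fun i _ => ?_
      rw [smul_smul, div_eq_inv_mul]
    rw [show x = ∑ i, c i • e i from (e.sum_repr x).symm] -- check orientation
    refine Tendsto.congr (fun n => (heq n).symm) ?_
    exact tendsto_finset_sum _ fun i _ => (aux_round_div (c i)).smul_const (e i)
  have hV : IsOpen (U ∩ {(0:EuclideanSpace ℝ (Fin N))}ᶜ) :=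
    hUo.inter (isClosed_singleton.isOpen_compl)
  have hxV : x ∈ U ∩ {(0:EuclideanSpace ℝ (Fin N))}ᶜ := ⟨hxU, hx0⟩
  have hev := (hgt.eventually (hV.mem_nhds hxV)).and (eventually_ge_atTop 1)
  obtain ⟨n, ⟨hnU, hn0⟩, hn1⟩ := hev.exists
  have hnpos : (0:ℝ) < n := by exact_mod_cast hn1
  refine ⟨q n, ?_, ?_⟩
  · intro hcontra
    apply hn0
    simp only [hcontra, ZeroMemClass.coe_zero, smul_zero, Set.mem_singleton_iff]
  · have := hUcone _ hnU n hnpos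
    rwa [smul_smul, mul_inv_cancel₀ (ne_of_gt hnpos), one_smul] at this

/-- A nonempty open cone in `ℝ^N` contains a primitive set of `m` vectors of any full-rank
lattice `L`, i.e. `m` lattice vectors that can be extended to a `ℤ`-basis of `L`. -/
theorem open_cone_contains_primitive_set {N m : ℕ} (hm : 1 ≤ m) (hmN : m ≤ N)
    (L : Submodule ℤ (EuclideanSpace ℝ (Fin N)))
    [DiscreteTopology L] [IsZLattice ℝ L]
    (U : Set (EuclideanSpace ℝ (Fin N))) (hUo : IsOpen U) (hUne : U.Nonempty)
    (hUcone : ∀ x ∈ U, ∀ t : ℝ, 0 < t → t • x ∈ U) :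
    ∃ l : Fin m → L, (∀ i, ((l i : L) : EuclideanSpace ℝ (Fin N)) ∈ U) ∧
      ∃ (b : Basis (Fin N) ℤ L) (f : Fin m ↪ Fin N), ∀ i, b (f i) = l i := by
  classical
  have hN : 0 < N := lt_of_lt_of_le hm hmN
  let z0 : Fin N := ⟨0, hN⟩
  haveI : Module.Finite ℤ L := ZLattice.module_finite ℝ L
  haveI : Module.Free ℤ L := ZLattice.module_free ℝ L
  obtain ⟨q, hq0, hqU⟩ := aux_lattice_point hN L U hUo hUne hUcone
  let b0 : Basis (Fin N) ℤ L := Module.finBasisOfFinrankEq ℤ L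
    (by rw [ZLattice.rank ℝ L, finrank_euclideanSpace_fin])
  obtain ⟨n, snf⟩ := Submodule.smithNormalForm b0 (Submodule.span ℤ {q})
  have hqS : q ∈ Submodule.span ℤ {q} := Submodule.mem_span_singleton_self q
  haveI : Nontrivial (Submodule.span ℤ {q}) :=
    nontrivial_of_ne ⟨q, hqS⟩ 0 (by simp [Subtype.ext_iff, hq0])
  obtain ⟨i0⟩ : Nonempty (Fin n) := snf.bN.index_nonempty
  obtain ⟨z, hz⟩ : ∃ z : ℤ, z • q = ((snf.bN i0 : Submodule.span ℤ {q}) : L) :=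
    Submodule.mem_span_singleton.mp (snf.bN i0).2
  have hrel : z • q = snf.a i0 • snf.bM (snf.f i0) := hz.trans (snf.snf i0)
  have hbN0 : ((snf.bN i0 : Submodule.span ℤ {q}) : L) ≠ 0 := by
    intro hcon
    exact snf.bN.ne_zero i0 (Subtype.ext hcon)
  have hz0 : z ≠ 0 := by
    rintro rfl
    rw [zero_smul] at hz
    exact hbN0 hz.symm
  have ha0 : snf.a i0 ≠ 0 := by
    intro hcon
    rw [hcon, zero_smul] at hrel
    exact hbN0 (hz.symm ▸ hrel)
  -- pass to E
  have hrelE : (z : ℝ) • (q : EuclideanSpace ℝ (Fin N))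
      = (snf.a i0 : ℝ) • ((snf.bM (snf.f i0) : L) : EuclideanSpace ℝ (Fin N)) := by
    have := congrArg (fun v : L => (v : EuclideanSpace ℝ (Fin N))) hrel
    simpa [Int.cast_smul_eq_zsmul] using this
  set t : ℝ := (z : ℝ) / (snf.a i0 : ℝ) with ht
  have haR : (snf.a i0 : ℝ) ≠ 0 := Int.cast_ne_zero.mpr ha0
  have hbmE : ((snf.bM (snf.f i0) : L) : EuclideanSpace ℝ (Fin N))
      = t • (q : EuclideanSpace ℝ (Fin N)) := by
    rw [ht, div_eq_inv_mul, mul_smul, hrelE, smul_smul, inv_mul_cancel₀ haR, one_smul]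
  have ht0 : t ≠ 0 := div_ne_zero (Int.cast_ne_zero.mpr hz0) haR
  -- fix the sign
  set s : ℤˣ := if 0 < t then 1 else -1 with hs
  let c1 : Basis (Fin N) ℤ L := snf.bM.unitsSMul (fun _ => s)
  have hc1j : ((c1 (snf.f i0) : L) : EuclideanSpace ℝ (Fin N))
      = (((s : ℤ) : ℝ) * t) • (q : EuclideanSpace ℝ (Fin N)) := by
    have h1 : c1 (snf.f i0) = (s : ℤ) • snf.bM (snf.f i0) := by
      rw [Basis.unitsSMul_apply]; rfl
    have := congrArg (fun v : L => (v : EuclideanSpace ℝ (Fin N))) h1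
    rw [this]
    push_cast [Int.cast_smul_eq_zsmul]
    rw [← Int.cast_smul_eq_zsmul ℝ, hbmE, smul_smul]
  have hst : 0 < ((s : ℤ) : ℝ) * t := by
    rcases lt_or_gt_of_ne ht0 with hneg | hpos
    · rw [hs, if_neg (not_lt.mpr hneg.le)]
      simp only [Units.val_neg, Units.val_one, Int.cast_neg, Int.cast_one]
      nlinarith
    · rw [hs, if_pos hpos]
      simpa using hpos
  have hpU : ((c1 (snf.f i0) : L) : EuclideanSpace ℝ (Fin N)) ∈ U := by
    rw [hc1j]; exact hUcone _ hqU _ hst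
  -- reindex so that the distinguished vector is at index 0
  let c : Basis (Fin N) ℤ L := c1.reindex (Equiv.swap (snf.f i0) z0)
  have hc0 : c z0 = c1 (snf.f i0) := by
    rw [Basis.reindex_apply, Equiv.symm_swap, Equiv.swap_apply_right]
  have hpU' : ((c z0 : L) : EuclideanSpace ℝ (Fin N)) ∈ U := by rw [hc0]; exact hpU
  -- choose coefficients
  have habs : ∀ i : Fin N, ∃ nn : ℕ, 0 < nn ∧
      ((c i : L) : EuclideanSpace ℝ (Fin N))
        + (nn : ℝ) • ((c z0 : L) : EuclideanSpace ℝ (Fin N)) ∈ U :=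
    fun i => aux_cone_absorb U hUo hUcone hpU' _
  choose kk hkpos hkmem using habs
  set k : Fin N → ℤ := fun i => if i = z0 then 0 else (kk i : ℤ) with hk
  set φ : L →ₗ[ℤ] ℤ := ∑ i : Fin N, k i • c.coord i with hφdef
  have hφ : ∀ l, φ (c l) = k l := by
    intro l
    rw [hφdef]
    simp only [LinearMap.sum_apply, LinearMap.smul_apply, Basis.coord_apply, Basis.repr_self,
      Finsupp.single_apply, smul_eq_mul, mul_ite, mul_one, mul_zero]
    simp [Finset.sum_ite_eq]
  have hφ0 : φ (c z0) = 0 := by rw [hφ, hk]; simp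
  set σ : L →ₗ[ℤ] L := LinearMap.id + φ.smulRight (c z0) with hσ
  set τ : L →ₗ[ℤ] L := LinearMap.id - φ.smulRight (c z0) with hτ
  have h1 : σ ∘ₗ τ = LinearMap.id := by
    apply LinearMap.ext; intro x
    simp only [hσ, hτ, LinearMap.coe_comp, Function.comp_apply, LinearMap.add_apply,
      LinearMap.sub_apply, LinearMap.id_apply, LinearMap.smulRight_apply, map_sub, map_smul,
      hφ0, smul_eq_mul, mul_zero, sub_zero, zero_smul, add_zero, neg_smul, one_smul]
    abel
  have h2 : τ ∘ₗ σ = LinearMap.id := by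
    apply LinearMap.ext; intro x
    simp only [hσ, hτ, LinearMap.coe_comp, Function.comp_apply, LinearMap.add_apply,
      LinearMap.sub_apply, LinearMap.id_apply, LinearMap.smulRight_apply, map_add, map_smul,
      hφ0, smul_eq_mul, mul_zero, add_zero, zero_smul, sub_zero, neg_smul, one_smul]
    abel
  set Teq : L ≃ₗ[ℤ] L := LinearEquiv.ofLinear σ τ h1 h2 with hTeq
  set b' : Basis (Fin N) ℤ L := c.map Teq with hb'def
  have hb' : ∀ l, b' l = c l + k l • c z0 := by
    intro l
    rw [hb'def, Basis.map_apply, hTeq, LinearEquiv.ofLinear_apply, hσ]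
    simp [LinearMap.smulRight_apply, hφ]
  refine ⟨fun i => b' (Fin.castLE hmN i), ?_,
    b', ⟨Fin.castLE hmN, Fin.castLE_injective hmN⟩, fun i => rfl⟩
  intro i
  show ((b' (Fin.castLE hmN i) : L) : EuclideanSpace ℝ (Fin N)) ∈ U
  rw [hb']
  by_cases h : (Fin.castLE hmN i : Fin N) = z0
  · rw [h]
    have hk0 : k z0 = 0 := by rw [hk]; simp
    rw [hk0, zero_smul, add_zero]
    exact hpU'
  · have hkl : k (Fin.castLE hmN i) = (kk (Fin.castLE hmN i) : ℤ) := by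
      rw [hk]; simp [h]
    rw [hkl]
    have hco : (((c (Fin.castLE hmN i) + (kk (Fin.castLE hmN i) : ℤ) • c z0 : L))
        : EuclideanSpace ℝ (Fin N))
        = ((c (Fin.castLE hmN i) : L) : EuclideanSpace ℝ (Fin N))
          + ((kk (Fin.castLE hmN i) : ℕ) : ℝ) • ((c z0 : L) : EuclideanSpace ℝ (Fin N)) := by
      rw [Submodule.coe_add, Submodule.coe_smul, ← Int.cast_smul_eq_zsmul ℝ]
      norm_num
    rw [hco]
    exact hkmem _
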